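/- (Remark 4.5) Let λ be a nonzero real number, κ₁ : ℝ → ℝ a continuous function, c₀ ∈ ℝ, and define θ(u) = c₀ + ∫₀ᵘ κ₁(t) dt and τ₁(u) = −(1/λ)·tanh θ(u). Then τ₁ is differentiable and satisfies τ₁'(u) = (κ₁(u)/λ)·(λ²·τ₁(u)² − 1) for all u. In particular, the equation τ₁' = (κ₁/λ)(λ²τ₁² − 1) characterizing the torsion of an admissible Mannheim partner curve in the pseudo-Galilean space G₃¹ admits this explicit solution. -/

import Mathlib

lemma hasDerivAt_tanh' (x : ℝ) :
    HasDerivAt Real.tanh (1 - Real.tanh x ^ 2) x := by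
  have hc : Real.cosh x ≠ 0 := (Real.cosh_pos x).ne'
  have h := (Real.hasDerivAt_sinh x).div (Real.hasDerivAt_cosh x) hc
  have heq : (Real.cosh x * Real.cosh x - Real.sinh x * Real.sinh x) / Real.cosh x ^ 2
      = 1 - Real.tanh x ^ 2 := by
    rw [Real.tanh_eq_sinh_div_cosh]
    have h1 := Real.cosh_sq_sub_sinh_sq x
    field_simp
  have h2 : (Real.sinh / Real.cosh) = Real.tanh := by
    ext y; rw [Pi.div_apply, Real.tanh_eq_sinh_div_cosh]
  rw [heq, h2] at h
  exact h

/-- Remark 4.5: with `θ(u) = c₀ + ∫₀ᵘ κ₁(t) dt` and `τ₁ = −(1/λ)·tanh θ`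
(`λ ≠ 0`, `κ₁` continuous), `τ₁` is differentiable and solves
`τ₁' = (κ₁/λ)(λ²τ₁² − 1)`, the equation characterizing the torsion of an
admissible Mannheim partner curve in the pseudo-Galilean space `G₃¹`. -/
theorem pseudo_galilean_mannheim_torsion_explicit_solution
    (lam : ℝ) (hlam : lam ≠ 0)
    (κ₁ : ℝ → ℝ) (hκ₁ : Continuous κ₁) (c₀ : ℝ)
    (θ τ₁ : ℝ → ℝ)
    (hθ : θ = fun u => c₀ + ∫ t in (0 : ℝ)..u, κ₁ t)
    (hτ₁ : τ₁ = fun u => -(1 / lam) * Real.tanh (θ u)) :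
    Differentiable ℝ τ₁ ∧
      ∀ u, deriv τ₁ u = (κ₁ u / lam) * (lam ^ 2 * (τ₁ u) ^ 2 - 1) := by
  have hθd : ∀ u, HasDerivAt θ (κ₁ u) u := by
    intro u
    rw [hθ]
    exact ((intervalIntegral.integral_hasDerivAt_right
      (hκ₁.intervalIntegrable 0 u)
      hκ₁.aestronglyMeasurable.stronglyMeasurableAtFilter
      hκ₁.continuousAt)).const_add c₀
  have hτd : ∀ u, HasDerivAt τ₁ (-(1 / lam) * ((1 - Real.tanh (θ u) ^ 2) * κ₁ u)) u := by
    intro u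
    rw [hτ₁]
    exact (((hasDerivAt_tanh' (θ u)).comp u (hθd u)).const_mul _)
  constructor
  · exact fun u => (hτd u).differentiableAt
  · intro u
    rw [(hτd u).deriv, hτ₁]
    field_simp
    ring
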